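/- Let X be an n×n matrix over a field F with X·Xᵀ = α·Iₙ for some α ≠ 0 in F. Write X = [A;B] where A is the matrix of the first r rows and B of the remaining n−r rows. Then the code C generated by A is an [n,r] LCD code (C ∩ C⊥ = 0) and the code generated by B equals the dual code C⊥. -/

import Mathlib

/-- The dual code of a code `C ⊆ F^ι`, with respect to the standard bilinear
form `⟨u, v⟩ = ∑ i, u i * v i`. -/
def dualCode {F : Type*} [Field F] {ι : Type*} [Fintype ι]
    (C : Submodule F (ι → F)) : Submodule F (ι → F) where
  carrier := {v | ∀ u ∈ C, ∑ i, u i * v i = 0}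
  add_mem' := by
    intro a b ha hb u hu
    simp only [Set.mem_setOf_eq] at *
    simp [Pi.add_apply, mul_add, Finset.sum_add_distrib, ha u hu, hb u hu]
  zero_mem' := by
    intro u hu
    simp
  smul_mem' := by
    intro c a ha u hu
    simp only [Set.mem_setOf_eq] at *
    simp only [Pi.smul_apply, smul_eq_mul, mul_left_comm, ← Finset.mul_sum, ha u hu, mul_zero]

lemma mem_dualCode {F : Type*} [Field F] {ι : Type*} [Fintype ι]
    (C : Submodule F (ι → F)) (v : ι → F) :
    v ∈ dualCode C ↔ ∀ u ∈ C, ∑ i, u i * v i = 0 := Iff.rfl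

/-- If `X * Xᵀ = α • I` with `α ≠ 0` and `X = [A; B]` with `A` the first `r` rows
and `B` the remaining `n - r` rows, then the code generated by `A` is an
`[n, r]` LCD code and the code generated by `B` is its dual. -/
theorem stmt_2 {F : Type*} [Field F] {n r : ℕ} (hr : r ≤ n)
    (X : Matrix (Fin n) (Fin n) F) (α : F) (hα : α ≠ 0)
    (hX : X * X.transpose = α • 1)
    (A : Matrix (Fin r) (Fin n) F) (B : Matrix (Fin (n - r)) (Fin n) F)
    (hA : ∀ (i : Fin r) (j : Fin n), A i j = X (Fin.castLE hr i) j)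
    (hB : ∀ (i : Fin (n - r)) (j : Fin n),
      B i j = X ⟨r + (i : ℕ), by have := i.isLt; omega⟩ j) :
    Module.finrank F (Submodule.span F (Set.range A)) = r ∧
    Submodule.span F (Set.range A) ⊓ dualCode (Submodule.span F (Set.range A)) = ⊥ ∧
    dualCode (Submodule.span F (Set.range A)) = Submodule.span F (Set.range B) := by
  have hA' : A = fun i => X (Fin.castLE hr i) := by funext i j; exact hA i j
  have hB' : B = fun (i : Fin (n - r)) => X ⟨r + (i : ℕ), by have := i.isLt; omega⟩ := by
    funext i j; exact hB i j
  have hXo : ∀ i j : Fin n, ∑ k, X i k * X j k = if i = j then α else 0 := by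
    intro i j
    have := congrFun (congrFun hX i) j
    simpa [Matrix.mul_apply, Matrix.transpose_apply, Matrix.one_apply,
      mul_ite, mul_one, mul_zero] using this
  -- pairing a row of X against a linear combination of rows of X
  have key : ∀ (c : Fin n → F) (j : Fin n),
      ∑ m, X j m * (∑ k, c k • X k) m = c j * α := by
    intro c j
    have : ∀ m, X j m * (∑ k, c k • X k) m = ∑ k, c k * (X k m * X j m) := by
      intro m
      simp only [Finset.sum_apply, Pi.smul_apply, smul_eq_mul, Finset.mul_sum]
      exact Finset.sum_congr rfl fun k _ => by ring
    rw [Finset.sum_congr rfl fun m _ => this m, Finset.sum_comm]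
    have : ∀ k : Fin n, ∑ m, c k * (X k m * X j m) = c k * (if k = j then α else 0) := by
      intro k
      rw [← Finset.mul_sum, hXo k j]
    rw [Finset.sum_congr rfl fun k _ => this k]
    simp [Finset.sum_ite_eq']
  -- rows of X are linearly independent
  have hli : LinearIndependent F X := by
    refine Fintype.linearIndependent_iff.mpr ?_
    intro g hg j
    have h0 := key g j
    rw [hg] at h0
    simp only [Pi.zero_apply, mul_zero, Finset.sum_const_zero] at h0
    exact (mul_eq_zero.mp h0.symm).resolve_right hα
  have hliA : LinearIndependent F A := by
    rw [hA']
    exact hli.comp (Fin.castLE hr) (Fin.castLE_injective hr)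
  have hAo : ∀ i j : Fin r, ∑ k, A i k * A j k = if i = j then α else 0 := by
    intro i j
    rw [hA']
    rw [hXo]
    by_cases h : i = j
    · subst h; rw [if_pos rfl, if_pos rfl]
    · rw [if_neg (fun hc => h (Fin.castLE_injective hr hc)), if_neg h]
  have hABo : ∀ (i : Fin r) (j : Fin (n - r)), ∑ k, A i k * B j k = 0 := by
    intro i j
    rw [hA', hB', hXo]
    have : (Fin.castLE hr i) ≠ (⟨r + (j : ℕ), by have := j.isLt; omega⟩ : Fin n) := by
      intro hc
      have h2 : (i : ℕ) = r + (j : ℕ) := congrArg Fin.val hc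
      have := i.isLt; omega
    rw [if_neg this]
  -- pairing with an element of span A
  have dualgen : ∀ (w : Fin n → F), (∀ i, ∑ k, A i k * w k = 0) →
      ∀ u ∈ Submodule.span F (Set.range A), ∑ k, u k * w k = 0 := by
    intro w hw u hu
    induction hu using Submodule.span_induction with
    | mem x hx => obtain ⟨i, rfl⟩ := hx; exact hw i
    | zero => simp
    | add x y _ _ hx hy => simp [add_mul, Finset.sum_add_distrib, hx, hy]
    | smul c x _ hx =>
      simp only [Pi.smul_apply, smul_eq_mul, mul_assoc, ← Finset.mul_sum, hx, mul_zero]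
  have hspanX : Submodule.span F (Set.range X) = ⊤ := by
    rcases Nat.eq_zero_or_pos n with h0 | h0
    · subst h0
      apply Submodule.eq_top_of_finrank_eq
      simp [Module.finrank_fin_fun, finrank_span_eq_card hli]
    · have : Nonempty (Fin n) := ⟨⟨0, h0⟩⟩
      exact hli.span_eq_top_of_card_eq_finrank (by simp [Module.finrank_fin_fun])
  refine ⟨?_, ?_, ?_⟩
  · rw [finrank_span_eq_card hliA, Fintype.card_fin]
  · -- intersection is trivial
    rw [Submodule.eq_bot_iff]
    intro v hv
    rw [Submodule.mem_inf] at hv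
    obtain ⟨hv1, hv2⟩ := hv
    replace hv1 := (Submodule.mem_span_range_iff_exists_fun F).mp hv1
    obtain ⟨c, rfl⟩ := hv1
    have hc : ∀ j : Fin r, c j = 0 := by
      intro j
      have h0 := hv2 (A j) (Submodule.subset_span ⟨j, rfl⟩)
      have : ∑ m, A j m * (∑ i, c i • A i) m = c j * α := by
        have : ∀ m, A j m * (∑ i, c i • A i) m = ∑ i, c i * (A i m * A j m) := by
          intro m
          simp only [Finset.sum_apply, Pi.smul_apply, smul_eq_mul, Finset.mul_sum]
          exact Finset.sum_congr rfl fun i _ => by ring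
        rw [Finset.sum_congr rfl fun m _ => this m, Finset.sum_comm]
        have h2 : ∀ i : Fin r, ∑ m, c i * (A i m * A j m) = c i * (if i = j then α else 0) := by
          intro i
          rw [← Finset.mul_sum, hAo i j]
        rw [Finset.sum_congr rfl fun i _ => h2 i]
        simp [Finset.sum_ite_eq']
      rw [h0] at this
      exact (mul_eq_zero.mp this.symm).resolve_right hα
    simp [hc]
  · -- dual = span B
    apply le_antisymm
    · intro v hv
      have hvtop : v ∈ Submodule.span F (Set.range X) := hspanX ▸ Submodule.mem_top
      replace hvtop := (Submodule.mem_span_range_iff_exists_fun F).mp hvtop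
      obtain ⟨c, rfl⟩ := hvtop
      have hc : ∀ i : Fin r, c (Fin.castLE hr i) = 0 := by
        intro i
        have hrow : (fun k => X (Fin.castLE hr i) k) = A i := by
          funext k; exact (hA i k).symm
        have h0 := hv (A i) (Submodule.subset_span ⟨i, rfl⟩)
        have h1 := key c (Fin.castLE hr i)
        have : ∑ m, A i m * (∑ k, c k • X k) m = c (Fin.castLE hr i) * α := by
          rw [← h1]
          exact Finset.sum_congr rfl fun m _ => by rw [hA i m]
        rw [h0] at this
        exact (mul_eq_zero.mp this.symm).resolve_right hα
      apply Submodule.sum_mem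
      intro k _
      by_cases hk : (k : ℕ) < r
      · have : c k = 0 := by
          have : k = Fin.castLE hr ⟨(k : ℕ), hk⟩ := by simp [Fin.ext_iff]
          rw [this]; exact hc _
        simp [this]
      · have hkr : (k : ℕ) - r < n - r := by have := k.isLt; omega
        have : X k = B ⟨(k : ℕ) - r, hkr⟩ := by
          have hkeq : k = (⟨r + ((k : ℕ) - r), by have := k.isLt; omega⟩ : Fin n) :=
            Fin.ext (by show (k : ℕ) = r + ((k : ℕ) - r); omega)
          funext m
          rw [hB]
          exact congrFun (congrArg X hkeq) m
        rw [this]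
        exact Submodule.smul_mem _ _ (Submodule.subset_span ⟨_, rfl⟩)
    · rw [Submodule.span_le]
      rintro _ ⟨j, rfl⟩
      rw [SetLike.mem_coe, mem_dualCode]
      exact dualgen (B j) (fun i => hABo i j)
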